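/- Consider the chain of N particles q_1, ..., q_N with equations q̈ = −Vq + c sin(ωt) e_N, where V is the tridiagonal matrix with diagonal 2ω₁² (except V_{NN} = ω₁²) and off-diagonal −ω₁², e_N = (0, ..., 0, 1), and zero initial conditions q(0) = p(0) = 0. Let ν_k² = 2ω₁²(cos(πk/(N+1/2)) + 1) be the eigenvalues of V with orthonormal eigenvectors g_k. If ω ≠ ν_k for every k, then the time-averaged kinetic energy of particle j, ⟨T_j⟩ = ⟨p_j²(t)⟩/2, exists and equals (1/4)(Σ_{k=1}^{N} (g_k, e_N)(g_k, e_j)·ωc/(ν_k² − ω²))² + (1/4) Σ_{k=1}^{N} (g_k, e_N)²(g_k, e_j)²·(ωc/(ν_k² − ω²))². -/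

import Mathlib

open Filter Topology Matrix

/-- The tridiagonal stiffness matrix of the chain: diagonal entries `2ω₁²` except the
last one which is `ω₁²`, and off-diagonal entries `-ω₁²`. -/
noncomputable def Vchain (N : ℕ) (ω1 : ℝ) : Matrix (Fin N) (Fin N) ℝ :=
  Matrix.of fun i j =>
    if i = j then (if (i : ℕ) = N - 1 then ω1 ^ 2 else 2 * ω1 ^ 2)
    else if (i : ℕ) + 1 = (j : ℕ) ∨ (j : ℕ) + 1 = (i : ℕ) then -ω1 ^ 2 else 0

/-- The eigenvalues `ν_k² = 2ω₁²(cos(πk/(N + 1/2)) + 1)` of `Vchain`. -/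
noncomputable def nusq (N : ℕ) (ω1 : ℝ) (k : ℕ) : ℝ :=
  2 * ω1 ^ 2 * (Real.cos (Real.pi * k / ((N : ℝ) + 1 / 2)) + 1)

/-- `eVec N m` is the standard basis vector `e_m` (particles are numbered `1, …, N`,
coordinate `i : Fin N` corresponding to particle `i + 1`). -/
def eVec (N : ℕ) (m : ℕ) : Fin N → ℝ := fun i => if (i : ℕ) + 1 = m then 1 else 0


lemma avg_cos (γ : ℝ) :
    Tendsto (fun t => (1/t) * ∫ s in (0:ℝ)..t, Real.cos (γ*s)) atTop
      (nhds (if γ = 0 then 1 else 0)) := by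
  by_cases h : γ = 0
  · simp only [h, if_pos rfl, zero_mul, Real.cos_zero]
    have : ∀ᶠ t in atTop, (1/t) * ∫ s in (0:ℝ)..t, (1:ℝ) = 1 := by
      filter_upwards [eventually_gt_atTop (0:ℝ)] with t ht
      rw [intervalIntegral.integral_const, smul_eq_mul, mul_one, sub_zero, one_div,
        inv_mul_cancel₀ (ne_of_gt ht)]
    exact Tendsto.congr' (this.mono fun t h => h.symm) tendsto_const_nhds
  · simp only [if_neg h]
    have hint : ∀ t : ℝ, ∫ s in (0:ℝ)..t, Real.cos (γ*s) = Real.sin (γ*t)/γ := by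
      intro t
      have : ∫ s in (0:ℝ)..t, Real.cos (γ*s)
          = Real.sin (γ*t)/γ - Real.sin (γ*0)/γ := by
        apply intervalIntegral.integral_eq_sub_of_hasDerivAt
        · intro x _
          have h1 : HasDerivAt (fun s : ℝ => γ * s) γ x := by
            simpa using (hasDerivAt_id x).const_mul γ
          have h2 := (h1.sin).div_const γ
          simpa [mul_comm, mul_div_assoc, mul_div_cancel_left₀ _ h] using h2
        · exact (Real.continuous_cos.comp (continuous_const.mul continuous_id)).intervalIntegrable _ _
      simpa using this
    have hbound : ∀ᶠ t in atTop, ‖(1/t) * ∫ s in (0:ℝ)..t, Real.cos (γ*s)‖ ≤ (1/|γ|) * (1/t) := by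
      filter_upwards [eventually_ge_atTop (1:ℝ)] with t ht
      rw [hint t]
      have ht0 : (0:ℝ) < t := lt_of_lt_of_le one_pos ht
      rw [norm_mul, Real.norm_eq_abs, Real.norm_eq_abs,
        abs_of_pos (by positivity : (0:ℝ) < 1/t), abs_div]
      have h1 : |Real.sin (γ*t)| ≤ 1 := Real.abs_sin_le_one _
      have h2 : |Real.sin (γ*t)| / |γ| ≤ 1 / |γ| :=
        div_le_div_of_nonneg_right h1 (by positivity) |>.trans_eq rfl
      calc (1/t) * (|Real.sin (γ*t)| / |γ|) ≤ (1/t) * (1/|γ|) :=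
            mul_le_mul_of_nonneg_left h2 (by positivity)
        _ = (1/|γ|) * (1/t) := by ring
    have hlim : Tendsto (fun t : ℝ => (1/|γ|) * (1/t)) atTop (nhds 0) := by
      simpa using (tendsto_const_nhds (x := 1/|γ|)).mul tendsto_inv_atTop_zero
    exact squeeze_zero_norm' hbound hlim

lemma avg_prod (α β : ℝ) (hα : 0 < α) (hβ : 0 < β) :
    Tendsto (fun t => (1/t) * ∫ s in (0:ℝ)..t, Real.cos (α*s) * Real.cos (β*s)) atTop
      (nhds (if α = β then 1/2 else 0)) := by
  have key : ∀ s : ℝ, Real.cos (α*s) * Real.cos (β*s)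
      = Real.cos ((α-β)*s)/2 + Real.cos ((α+β)*s)/2 := by
    intro s
    rw [show (α-β)*s = α*s - β*s by ring, show (α+β)*s = α*s + β*s by ring,
      Real.cos_sub, Real.cos_add]
    ring
  have hco : ∀ γ : ℝ, Continuous (fun s : ℝ => Real.cos (γ*s)) := fun γ =>
    Real.continuous_cos.comp (continuous_const.mul continuous_id)
  have heq : ∀ t : ℝ, (1/t) * ∫ s in (0:ℝ)..t, Real.cos (α*s) * Real.cos (β*s)
      = ((1/t) * ∫ s in (0:ℝ)..t, Real.cos ((α-β)*s))/2
        + ((1/t) * ∫ s in (0:ℝ)..t, Real.cos ((α+β)*s))/2 := by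
    intro t
    rw [intervalIntegral.integral_congr (g := fun s => Real.cos ((α-β)*s)/2 + Real.cos ((α+β)*s)/2)
      (fun s _ => key s)]
    rw [intervalIntegral.integral_add (((hco _).div_const 2).intervalIntegrable _ _)
      (((hco _).div_const 2).intervalIntegrable _ _),
      intervalIntegral.integral_div, intervalIntegral.integral_div]
    ring
  have h1 := avg_cos (α-β)
  have h2 := avg_cos (α+β)
  have hsum := (h1.div_const 2).add (h2.div_const 2)
  have : Tendsto (fun t => (1/t) * ∫ s in (0:ℝ)..t, Real.cos (α*s) * Real.cos (β*s)) atTop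
      (nhds ((if α-β = 0 then 1 else 0)/2 + (if α+β = 0 then 1 else 0)/2)) :=
    hsum.congr (fun t => (heq t).symm)
  convert this using 2
  have hne : α + β ≠ 0 := by positivity
  by_cases h : α = β <;> simp [h, sub_eq_zero, hne, hβ.ne']

lemma avg_sum_sq (S : Finset ℕ) (μ C : ℕ → ℝ) (hpos : ∀ k ∈ S, 0 < μ k)
    (hinj : ∀ k ∈ S, ∀ l ∈ S, μ k = μ l → k = l) :
    Tendsto (fun t => (1/t) * ∫ s in (0:ℝ)..t,
        (∑ k ∈ S, C k * Real.cos (μ k * s))^2 / 2) atTop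
      (nhds ((1/4) * ∑ k ∈ S, (C k)^2)) := by
  have key : ∀ s : ℝ, (∑ k ∈ S, C k * Real.cos (μ k * s))^2 / 2
      = ∑ k ∈ S, ∑ l ∈ S, (C k * C l / 2) * (Real.cos (μ k * s) * Real.cos (μ l * s)) := by
    intro s
    rw [sq, Finset.sum_mul_sum, Finset.sum_div]
    refine Finset.sum_congr rfl fun k _ => ?_
    rw [Finset.sum_div]
    exact Finset.sum_congr rfl fun l _ => by ring
  have heq : ∀ t : ℝ, (1/t) * ∫ s in (0:ℝ)..t,
      (∑ k ∈ S, C k * Real.cos (μ k * s))^2 / 2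
      = ∑ k ∈ S, ∑ l ∈ S, (C k * C l / 2) *
          ((1/t) * ∫ s in (0:ℝ)..t, Real.cos (μ k * s) * Real.cos (μ l * s)) := by
    intro t
    rw [intervalIntegral.integral_congr (g := fun s => ∑ k ∈ S, ∑ l ∈ S,
      (C k * C l / 2) * (Real.cos (μ k * s) * Real.cos (μ l * s))) (fun s _ => key s)]
    rw [intervalIntegral.integral_finset_sum
      (fun k _ => Continuous.intervalIntegrable (by fun_prop) _ _), Finset.mul_sum]
    refine Finset.sum_congr rfl fun k _ => ?_
    rw [intervalIntegral.integral_finset_sum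
      (fun l _ => Continuous.intervalIntegrable (by fun_prop) _ _), Finset.mul_sum]
    refine Finset.sum_congr rfl fun l _ => ?_
    rw [intervalIntegral.integral_const_mul]
    ring
  have hlim := tendsto_finset_sum S (fun k hk => tendsto_finset_sum S (fun l hl =>
    ((avg_prod (μ k) (μ l) (hpos k hk) (hpos l hl)).const_mul (C k * C l / 2))))
  have hval : ∑ k ∈ S, ∑ l ∈ S, (C k * C l / 2) * (if μ k = μ l then 1/2 else 0)
      = (1/4) * ∑ k ∈ S, (C k)^2 := by
    rw [Finset.mul_sum]
    refine Finset.sum_congr rfl fun k hk => ?_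
    have : ∀ l ∈ S, (C k * C l / 2) * (if μ k = μ l then 1/2 else 0)
        = if l = k then C k ^ 2 / 4 else 0 := by
      intro l hl
      by_cases h : l = k
      · subst h; simp; ring
      · rw [if_neg h, if_neg (fun hm => h (hinj l hl k hk hm.symm)), mul_zero]
    rw [Finset.sum_congr rfl this, Finset.sum_ite_eq' S k, if_pos hk]
    ring
  rw [← hval]
  exact hlim.congr (fun t => (heq t).symm)

/-- Energy uniqueness for the harmonic oscillator. -/
lemma osc_unique (ν2 : ℝ) (hν : 0 < ν2) (x y : ℝ → ℝ)
    (hx : ∀ t, HasDerivAt x (y t) t) (hy : ∀ t, HasDerivAt y (-ν2 * x t) t)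
    (hx0 : x 0 = 0) (hy0 : y 0 = 0) : ∀ t, y t = 0 := by
  set E : ℝ → ℝ := fun t => y t ^ 2 + ν2 * x t ^ 2 with hE
  have hE' : ∀ t, HasDerivAt E 0 t := by
    intro t
    have h := (((hy t).pow 2)).add (((hx t).pow 2).const_mul ν2)
    refine h.congr_deriv ?_
    ring
  have hconst : ∀ t, E t = E 0 :=
    fun t => is_const_of_deriv_eq_zero (fun s => (hE' s).differentiableAt)
      (fun s => (hE' s).deriv) t 0
  intro t
  have h0 : E 0 = 0 := by simp [hE, hx0, hy0]
  have h2 : y t ^ 2 + ν2 * x t ^ 2 = 0 := (hconst t).trans h0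
  have h3 : y t ^ 2 = 0 := by nlinarith [sq_nonneg (x t), sq_nonneg (y t)]
  exact pow_eq_zero_iff (n := 2) (by norm_num) |>.mp h3

lemma Vchain_symm (N : ℕ) (ω1 : ℝ) : (Vchain N ω1)ᵀ = Vchain N ω1 := by
  ext i j
  simp only [Matrix.transpose_apply, Vchain, Matrix.of_apply]
  by_cases h : i = j
  · simp [h]
  · rw [if_neg (fun hh => h hh.symm), if_neg h]
    exact if_congr or_comm rfl rfl

lemma dot_mulVec_symm {N : ℕ} (A : Matrix (Fin N) (Fin N) ℝ) (hA : Aᵀ = A)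
    (x y : Fin N → ℝ) : A.mulVec x ⬝ᵥ y = x ⬝ᵥ A.mulVec y := by
  calc A.mulVec x ⬝ᵥ y = y ⬝ᵥ A.mulVec x := dotProduct_comm _ _
    _ = A.vecMul y ⬝ᵥ x := Matrix.dotProduct_mulVec y A x
    _ = (Aᵀ.mulVec y) ⬝ᵥ x := by rw [Matrix.mulVec_transpose]
    _ = x ⬝ᵥ A.mulVec y := by rw [hA, dotProduct_comm]

lemma nusq_pos (N : ℕ) (ω1 : ℝ) (hω1 : 0 < ω1) (k : ℕ) (hk1 : 1 ≤ k) (hk2 : k ≤ N) :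
    0 < nusq N ω1 k := by
  have hNpos : (0:ℝ) < (N:ℝ) + 1/2 := by positivity
  have harg1 : 0 < Real.pi * k / ((N:ℝ) + 1/2) := by
    have : (0:ℝ) < k := by exact_mod_cast hk1
    positivity
  have harg2 : Real.pi * k / ((N:ℝ) + 1/2) < Real.pi := by
    rw [div_lt_iff₀ hNpos]
    have hkN : (k:ℝ) ≤ N := by exact_mod_cast hk2
    nlinarith [Real.pi_pos]
  have hcos : Real.cos (Real.pi * k / ((N:ℝ) + 1/2)) > Real.cos Real.pi := by
    apply Real.strictAntiOn_cos ⟨le_of_lt harg1, le_of_lt harg2⟩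
      ⟨Real.pi_nonneg, le_refl _⟩ harg2
  rw [Real.cos_pi] at hcos
  have : 0 < Real.cos (Real.pi * k / ((N:ℝ) + 1/2)) + 1 := by linarith
  unfold nusq
  positivity

lemma nusq_strictanti (N : ℕ) (ω1 : ℝ) (hω1 : 0 < ω1) (k l : ℕ)
    (hk1 : 1 ≤ k) (hl2 : l ≤ N) (hkl : k < l) : nusq N ω1 l < nusq N ω1 k := by
  have hNpos : (0:ℝ) < (N:ℝ) + 1/2 := by positivity
  have hkl' : (k:ℝ) < l := by exact_mod_cast hkl
  have hlN : (l:ℝ) ≤ N := by exact_mod_cast hl2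
  have hcos : Real.cos (Real.pi * l / ((N:ℝ) + 1/2)) < Real.cos (Real.pi * k / ((N:ℝ) + 1/2)) := by
    apply Real.strictAntiOn_cos
    · constructor
      · positivity
      · rw [div_le_iff₀ hNpos]; nlinarith [Real.pi_pos]
    · constructor
      · positivity
      · rw [div_le_iff₀ hNpos]; nlinarith [Real.pi_pos]
    · rw [div_lt_div_iff₀ hNpos hNpos]
      nlinarith [mul_pos (mul_pos Real.pi_pos hNpos) (sub_pos.mpr hkl')]
  unfold nusq
  nlinarith [pow_pos hω1 2]

lemma dot_eVec (N : ℕ) (x : Fin N → ℝ) (j : ℕ) (h1 : 1 ≤ j) (h2 : j ≤ N) :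
    x ⬝ᵥ eVec N j = x ⟨j-1, by omega⟩ := by
  unfold dotProduct eVec
  rw [Finset.sum_eq_single (⟨j-1, by omega⟩ : Fin N)]
  · rw [if_pos (by simp; omega), mul_one]
  · intro i _ hne
    rw [if_neg (fun hh => hne (by apply Fin.ext; simp; omega)), mul_zero]
  · intro h; exact absurd (Finset.mem_univ _) h

lemma sum_Icc_one (N : ℕ) (f : ℕ → ℝ) :
    ∑ k ∈ Finset.Icc 1 N, f k = ∑ k : Fin N, f ((k:ℕ)+1) := by
  rw [show Finset.Icc 1 N = Finset.Ico 1 (N+1) by rfl, Finset.sum_Ico_eq_sum_range]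
  simp only [Nat.add_sub_cancel]
  rw [Fin.sum_univ_eq_sum_range (fun i => f (i+1)) N]
  exact Finset.sum_congr rfl fun i _ => by rw [add_comm]

lemma gcomplete (N : ℕ) (g : ℕ → Fin N → ℝ)
    (hgortho : ∀ k l, 1 ≤ k → k ≤ N → 1 ≤ l → l ≤ N →
      g k ⬝ᵥ g l = if k = l then 1 else 0) :
    ∀ i i' : Fin N, ∑ k ∈ Finset.Icc 1 N, g k i * g k i' = if i = i' then 1 else 0 := by
  set G : Matrix (Fin N) (Fin N) ℝ := Matrix.of (fun k i => g ((k:ℕ)+1) i) with hG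
  have h1 : G * Gᵀ = 1 := by
    ext k l
    rw [Matrix.mul_apply]
    have horth := hgortho ((k:ℕ)+1) ((l:ℕ)+1) (by omega) (by omega)
      (by omega) (by omega)
    have : ∑ i, G k i * Gᵀ i l = g ((k:ℕ)+1) ⬝ᵥ g ((l:ℕ)+1) := rfl
    rw [this, horth, Matrix.one_apply]
    have : ((k:ℕ)+1 = (l:ℕ)+1) ↔ (k = l) := by
      rw [Fin.ext_iff]; omega
    simp [this, Fin.val_inj]
  have h2 : Gᵀ * G = 1 := mul_eq_one_comm.mp h1
  intro i i'
  have h3 := congrFun (congrFun h2 i) i'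
  have h4 : (Gᵀ * G) i i' = ∑ k : Fin N, g ((k:ℕ)+1) i * g ((k:ℕ)+1) i' := by
    rw [Matrix.mul_apply]; rfl
  rw [sum_Icc_one N (fun k => g k i * g k i'), ← h4, h3, Matrix.one_apply]

lemma mode_solution (ν2 ω b : ℝ) (hν : 0 < ν2) (hω : 0 < ω) (hne : ν2 ≠ ω^2)
    (x y : ℝ → ℝ) (hx0 : x 0 = 0) (hy0 : y 0 = 0)
    (hx : ∀ t, HasDerivAt x (y t) t)
    (hy : ∀ t, HasDerivAt y (-ν2 * x t + b * Real.sin (ω*t)) t) :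
    ∀ t, y t = (b * ω / (ν2 - ω^2)) * (Real.cos (ω*t) - Real.cos (Real.sqrt ν2 * t)) := by
  set ν := Real.sqrt ν2 with hνdef
  have hνpos : 0 < ν := Real.sqrt_pos.mpr hν
  have hνsq : ν^2 = ν2 := Real.sq_sqrt hν.le
  have hd : ν2 - ω^2 ≠ 0 := sub_ne_zero.mpr hne
  set xh : ℝ → ℝ := fun t => (b/(ν2 - ω^2)) * (Real.sin (ω*t) - (ω/ν) * Real.sin (ν*t)) with hxh
  set yh : ℝ → ℝ := fun t => (b*ω/(ν2 - ω^2)) * (Real.cos (ω*t) - Real.cos (ν*t)) with hyh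
  have h1 : ∀ t : ℝ, HasDerivAt (fun s:ℝ => ω*s) ω t := fun t => by
    simpa using (hasDerivAt_id t).const_mul ω
  have h2 : ∀ t : ℝ, HasDerivAt (fun s:ℝ => ν*s) ν t := fun t => by
    simpa using (hasDerivAt_id t).const_mul ν
  have hxh' : ∀ t, HasDerivAt xh (yh t) t := by
    intro t
    have h := (((h1 t).sin).sub (((h2 t).sin).const_mul (ω/ν))).const_mul (b/(ν2-ω^2))
    refine h.congr_deriv ?_
    rw [hyh]
    field_simp
  have hyh' : ∀ t, HasDerivAt yh (-ν2 * xh t + b * Real.sin (ω*t)) t := by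
    intro t
    have h := (((h1 t).cos).sub ((h2 t).cos)).const_mul (b*ω/(ν2-ω^2))
    refine h.congr_deriv ?_
    rw [hxh]
    rw [← hνsq]
    have hd2 : ν^2 - ω^2 ≠ 0 := by rw [hνsq]; exact hd
    field_simp
    ring
  have huniq := osc_unique ν2 hν (fun t => x t - xh t) (fun t => y t - yh t)
    (fun t => (hx t).sub (hxh' t))
    (fun t => by
      have h := (hy t).sub (hyh' t)
      refine h.congr_deriv ?_
      ring)
    (by simp [hx0, hxh]) (by simp [hy0, hyh])
  intro t
  have h : y t - yh t = 0 := huniq t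
  have : y t = yh t := by linarith
  rw [this, hyh]

theorem stmt17 (N : ℕ) (hN : 1 ≤ N) (ω1 ω c : ℝ) (hω1 : 0 < ω1) (hω : 0 < ω)
    -- no resonance: ω ≠ ν_k for every k
    (hres : ∀ k, 1 ≤ k → k ≤ N → ω ≠ Real.sqrt (nusq N ω1 k))
    -- orthonormal eigenvectors g_k of V
    (g : ℕ → Fin N → ℝ)
    (hg : ∀ k, 1 ≤ k → k ≤ N →
      (Vchain N ω1).mulVec (g k) = nusq N ω1 k • g k)
    (hgortho : ∀ k l, 1 ≤ k → k ≤ N → 1 ≤ l → l ≤ N →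
      g k ⬝ᵥ g l = if k = l then 1 else 0)
    -- the dynamics q̈ = -Vq + c sin(ωt) e_N with zero initial conditions
    (q p : ℝ → Fin N → ℝ) (hq0 : q 0 = 0) (hp0 : p 0 = 0)
    (hq : ∀ t i, HasDerivAt (fun s => q s i) (p t i) t)
    (hp : ∀ t i, HasDerivAt (fun s => p s i)
      (-(Vchain N ω1).mulVec (q t) i + c * Real.sin (ω * t) * eVec N N i) t) :
    -- the time-averaged kinetic energy of particle j exists and equals the stated value
    ∀ j, 1 ≤ j → j ≤ N →
      Tendsto (fun t => (1 / t) * ∫ s in (0:ℝ)..t, (p s ⬝ᵥ eVec N j) ^ 2 / 2)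
        atTop
        (nhds ((1 / 4) * (∑ k ∈ Finset.Icc 1 N,
            (g k ⬝ᵥ eVec N N) * (g k ⬝ᵥ eVec N j) * (ω * c / (nusq N ω1 k - ω ^ 2))) ^ 2
          + (1 / 4) * ∑ k ∈ Finset.Icc 1 N,
            (g k ⬝ᵥ eVec N N) ^ 2 * (g k ⬝ᵥ eVec N j) ^ 2
              * (ω * c / (nusq N ω1 k - ω ^ 2)) ^ 2)) := by
  intro j hj1 hj2
  have hVsymm : (Vchain N ω1)ᵀ = Vchain N ω1 := Vchain_symm N ω1
  have hnupos : ∀ k, 1 ≤ k → k ≤ N → 0 < nusq N ω1 k :=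
    fun k h1 h2 => nusq_pos N ω1 hω1 k h1 h2
  have hne : ∀ k, 1 ≤ k → k ≤ N → nusq N ω1 k ≠ ω^2 := by
    intro k h1 h2 heq
    exact hres k h1 h2 (by rw [heq, Real.sqrt_sq hω.le])
  -- per-mode solution
  have hmode : ∀ k, 1 ≤ k → k ≤ N → ∀ t, p t ⬝ᵥ g k
      = ((c * (g k ⬝ᵥ eVec N N)) * ω / (nusq N ω1 k - ω^2))
        * (Real.cos (ω*t) - Real.cos (Real.sqrt (nusq N ω1 k) * t)) := by
    intro k hk1 hk2
    apply mode_solution (nusq N ω1 k) ω (c * (g k ⬝ᵥ eVec N N)) (hnupos k hk1 hk2) hω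
      (hne k hk1 hk2) (fun t => q t ⬝ᵥ g k) (fun t => p t ⬝ᵥ g k)
      (by simp [hq0, dotProduct]) (by simp [hp0, dotProduct])
    · intro t
      have h : HasDerivAt (fun s => ∑ i, q s i * g k i) (∑ i, p t i * g k i) t :=
        HasDerivAt.fun_sum (fun i _ => (hq t i).mul_const (g k i))
      exact h
    · intro t
      have hD : HasDerivAt (fun s => ∑ i, p s i * g k i)
          (∑ i, (-(Vchain N ω1).mulVec (q t) i + c * Real.sin (ω*t) * eVec N N i) * g k i) t :=
        HasDerivAt.fun_sum (fun i _ => (hp t i).mul_const (g k i))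
      have hval : ∑ i, (-(Vchain N ω1).mulVec (q t) i + c * Real.sin (ω*t) * eVec N N i) * g k i
          = -(nusq N ω1 k) * (q t ⬝ᵥ g k) + (c * (g k ⬝ᵥ eVec N N)) * Real.sin (ω*t) := by
        have hsplit : ∑ i, (-(Vchain N ω1).mulVec (q t) i + c * Real.sin (ω*t) * eVec N N i) * g k i
            = -((Vchain N ω1).mulVec (q t) ⬝ᵥ g k)
              + c * Real.sin (ω*t) * (eVec N N ⬝ᵥ g k) := by
          rw [dotProduct, dotProduct, ← Finset.sum_neg_distrib, Finset.mul_sum,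
            ← Finset.sum_add_distrib]
          exact Finset.sum_congr rfl fun i _ => by ring
        rw [hsplit, dot_mulVec_symm _ hVsymm, hg k hk1 hk2, dotProduct_smul,
          dotProduct_comm (eVec N N) (g k)]
        simp only [smul_eq_mul]
        ring
      exact hval ▸ hD
  -- expansion over the eigenbasis
  have hcomp := gcomplete N g hgortho
  have hexp : ∀ t, p t ⬝ᵥ eVec N j
      = ∑ k ∈ Finset.Icc 1 N, (g k ⬝ᵥ eVec N j) * (p t ⬝ᵥ g k) := by
    intro t
    have hjj : ∀ x : Fin N → ℝ, x ⬝ᵥ eVec N j = x ⟨j-1, by omega⟩ :=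
      fun x => dot_eVec N x j hj1 hj2
    set jj : Fin N := ⟨j-1, by omega⟩ with hjjdef
    rw [hjj (p t)]
    calc p t jj = ∑ i, p t i * (if i = jj then 1 else 0) := by
          symm
          rw [Finset.sum_congr rfl (fun i (_ : i ∈ Finset.univ) => by
            rw [mul_ite, mul_one, mul_zero]),
            Finset.sum_ite_eq' Finset.univ jj (fun i => p t i), if_pos (Finset.mem_univ jj)]
      _ = ∑ i, p t i * ∑ k ∈ Finset.Icc 1 N, g k i * g k jj := by
          exact Finset.sum_congr rfl fun i _ => by rw [hcomp i jj]
      _ = ∑ i, ∑ k ∈ Finset.Icc 1 N, g k jj * (p t i * g k i) := by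
          refine Finset.sum_congr rfl fun i _ => ?_
          rw [Finset.mul_sum]
          exact Finset.sum_congr rfl fun kk _ => by ring
      _ = ∑ k ∈ Finset.Icc 1 N, ∑ i, g k jj * (p t i * g k i) := Finset.sum_comm
      _ = ∑ k ∈ Finset.Icc 1 N, (g k ⬝ᵥ eVec N j) * (p t ⬝ᵥ g k) := by
          refine Finset.sum_congr rfl fun k _ => ?_
          rw [hjj (g k), dotProduct, Finset.mul_sum]
  -- the trig-sum form
  set β : ℕ → ℝ := fun k =>
    (g k ⬝ᵥ eVec N j) * ((c * (g k ⬝ᵥ eVec N N)) * ω / (nusq N ω1 k - ω^2)) with hβ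
  set μ : ℕ → ℝ := fun k => if k = 0 then ω else Real.sqrt (nusq N ω1 k) with hμ
  set C : ℕ → ℝ := fun k => if k = 0 then (∑ l ∈ Finset.Icc 1 N, β l) else -β k with hC
  have hins : Finset.Icc 0 N = insert 0 (Finset.Icc 1 N) := by
    ext x; simp only [Finset.mem_Icc, Finset.mem_insert]; omega
  have hF : ∀ s, p s ⬝ᵥ eVec N j = ∑ k ∈ Finset.Icc 0 N, C k * Real.cos (μ k * s) := by
    intro s
    rw [hins, Finset.sum_insert (by simp)]
    have h0 : C 0 * Real.cos (μ 0 * s) = (∑ l ∈ Finset.Icc 1 N, β l) * Real.cos (ω * s) := by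
      simp [hC, hμ]
    rw [h0, hexp s]
    have hterm : ∀ k ∈ Finset.Icc 1 N, (g k ⬝ᵥ eVec N j) * (p s ⬝ᵥ g k)
        = β k * Real.cos (ω*s) - β k * Real.cos (Real.sqrt (nusq N ω1 k) * s) := by
      intro k hk
      rw [Finset.mem_Icc] at hk
      rw [hmode k hk.1 hk.2 s, hβ]
      ring
    rw [Finset.sum_congr rfl hterm, Finset.sum_sub_distrib, ← Finset.sum_mul,
      sub_eq_add_neg, ← Finset.sum_neg_distrib]
    congr 1
    refine Finset.sum_congr rfl fun k hk => ?_
    rw [Finset.mem_Icc] at hk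
    have hk0 : k ≠ 0 := by omega
    simp only [hC, hμ, if_neg hk0]
    ring
  -- frequencies are positive and distinct
  have hpos : ∀ k ∈ Finset.Icc 0 N, 0 < μ k := by
    intro k hk
    rw [Finset.mem_Icc] at hk
    by_cases h : k = 0
    · simp [hμ, h, hω]
    · simp only [hμ, if_neg h]
      exact Real.sqrt_pos.mpr (hnupos k (by omega) hk.2)
  have hnusq_inj : ∀ k l, 1 ≤ k → k ≤ N → 1 ≤ l → l ≤ N →
      nusq N ω1 k = nusq N ω1 l → k = l := by
    intro k l hk1 hk2 hl1 hl2 heq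
    by_contra hne'
    rcases lt_or_gt_of_ne hne' with h | h
    · exact absurd heq (ne_of_gt (nusq_strictanti N ω1 hω1 k l hk1 hl2 h))
    · exact absurd heq.symm (ne_of_gt (nusq_strictanti N ω1 hω1 l k hl1 hk2 h))
  have hinj : ∀ k ∈ Finset.Icc 0 N, ∀ l ∈ Finset.Icc 0 N, μ k = μ l → k = l := by
    intro k hk l hl heq
    rw [Finset.mem_Icc] at hk hl
    by_cases h1 : k = 0 <;> by_cases h2 : l = 0
    · rw [h1, h2]
    · exfalso
      rw [h1] at heq
      simp only [hμ, if_pos rfl, if_neg h2] at heq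
      exact hres l (by omega) hl.2 heq
    · exfalso
      rw [h2] at heq
      simp only [hμ, if_neg h1, if_pos rfl] at heq
      exact hres k (by omega) hk.2 heq.symm
    · simp only [hμ, if_neg h1, if_neg h2] at heq
      have := (Real.sqrt_inj (hnupos k (by omega) hk.2).le
        (hnupos l (by omega) hl.2).le).mp heq
      exact hnusq_inj k l (by omega) hk.2 (by omega) hl.2 this
  have hmain := avg_sum_sq (Finset.Icc 0 N) μ C hpos hinj
  -- identify the limit value
  have hvalue : (1/4 : ℝ) * ∑ k ∈ Finset.Icc 0 N, (C k)^2
      = (1 / 4) * (∑ k ∈ Finset.Icc 1 N,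
            (g k ⬝ᵥ eVec N N) * (g k ⬝ᵥ eVec N j) * (ω * c / (nusq N ω1 k - ω ^ 2))) ^ 2
          + (1 / 4) * ∑ k ∈ Finset.Icc 1 N,
            (g k ⬝ᵥ eVec N N) ^ 2 * (g k ⬝ᵥ eVec N j) ^ 2
              * (ω * c / (nusq N ω1 k - ω ^ 2)) ^ 2 := by
    rw [hins, Finset.sum_insert (by simp)]
    have hβeq : ∀ k ∈ Finset.Icc 1 N, β k
        = (g k ⬝ᵥ eVec N N) * (g k ⬝ᵥ eVec N j) * (ω * c / (nusq N ω1 k - ω ^ 2)) := by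
      intro k _
      rw [hβ]
      ring
    have h0 : (C 0)^2 = (∑ k ∈ Finset.Icc 1 N,
        (g k ⬝ᵥ eVec N N) * (g k ⬝ᵥ eVec N j) * (ω * c / (nusq N ω1 k - ω ^ 2))) ^ 2 := by
      simp only [hC, if_pos rfl]
      rw [Finset.sum_congr rfl hβeq]
    have h1 : ∑ k ∈ Finset.Icc 1 N, (C k)^2 = ∑ k ∈ Finset.Icc 1 N,
        (g k ⬝ᵥ eVec N N) ^ 2 * (g k ⬝ᵥ eVec N j) ^ 2
          * (ω * c / (nusq N ω1 k - ω ^ 2)) ^ 2 := by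
      refine Finset.sum_congr rfl fun k hk => ?_
      rw [Finset.mem_Icc] at hk
      have hk0 : k ≠ 0 := by omega
      simp only [hC, if_neg hk0, hβ]
      ring
    rw [mul_add, h0, h1]
  rw [← hvalue]
  refine hmain.congr fun t => ?_
  congr 1
  exact intervalIntegral.integral_congr fun s _ => by rw [hF s]
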